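/- Let f and g be right quaternionic polynomials and z₀ ∈ ℍ. Then (f*g)(z₀) = 0 if and only if f(z₀) = 0, or f(z₀) ≠ 0 and g(f(z₀)^{−1} z₀ f(z₀)) = 0. -/

import Mathlib

open scoped Quaternion
open Finset Matrix

noncomputable def specNorm {n : ℕ} (A : Matrix (Fin n) (Fin n) ℍ[ℝ]) : ℝ :=
  sSup {r : ℝ | ∃ x : Fin n → ℍ[ℝ], x ≠ 0 ∧
    r = Real.sqrt (∑ i, ‖A.mulVec x i‖ ^ 2) / Real.sqrt (∑ i, ‖x i‖ ^ 2)}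

theorem zeros_of_convolution (m k : ℕ) (a b : ℕ → ℍ[ℝ]) (z₀ : ℍ[ℝ]) :
    (∑ i ∈ Finset.range (m + 1), ∑ j ∈ Finset.range (k + 1),
        z₀ ^ (i + j) * (a i * b j)) = 0 ↔
      (∑ i ∈ Finset.range (m + 1), z₀ ^ i * a i) = 0 ∨
      ((∑ i ∈ Finset.range (m + 1), z₀ ^ i * a i) ≠ 0 ∧
        (∑ j ∈ Finset.range (k + 1),
          ((∑ i ∈ Finset.range (m + 1), z₀ ^ i * a i)⁻¹ * z₀ *
            (∑ i ∈ Finset.range (m + 1), z₀ ^ i * a i)) ^ j * b j) = 0) := by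
  set S := ∑ i ∈ Finset.range (m + 1), z₀ ^ i * a i with hS
  have key : (∑ i ∈ Finset.range (m + 1), ∑ j ∈ Finset.range (k + 1),
      z₀ ^ (i + j) * (a i * b j)) =
      ∑ j ∈ Finset.range (k + 1), z₀ ^ j * S * b j := by
    rw [Finset.sum_comm]
    refine Finset.sum_congr rfl fun j _ => ?_
    rw [hS, Finset.mul_sum, Finset.sum_mul]
    refine Finset.sum_congr rfl fun i _ => ?_
    rw [add_comm, pow_add]
    simp [mul_assoc]
  rw [key]
  by_cases hSz : S = 0
  · simp [hSz]
  · have hconj : ∀ j : ℕ, (S⁻¹ * z₀ * S) ^ j = S⁻¹ * z₀ ^ j * S := by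
      intro j
      induction j with
      | zero => simp [inv_mul_cancel₀ hSz]
      | succ n ih =>
        rw [pow_succ, pow_succ, ih]
        simp [mul_assoc, inv_mul_cancel_left₀ hSz, mul_inv_cancel_left₀ hSz]
    have hfac : (∑ j ∈ Finset.range (k + 1), z₀ ^ j * S * b j) =
        S * ∑ j ∈ Finset.range (k + 1), (S⁻¹ * z₀ * S) ^ j * b j := by
      rw [Finset.mul_sum]
      refine Finset.sum_congr rfl fun j _ => ?_
      rw [hconj]
      simp [mul_assoc, mul_inv_cancel_left₀ hSz]
    rw [hfac]
    constructor
    · intro h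
      exact Or.inr ⟨hSz, by
        rcases mul_eq_zero.mp h with h1 | h2
        · exact absurd h1 hSz
        · exact h2⟩
    · rintro (h | ⟨-, h⟩)
      · exact absurd h hSz
      · rw [h, mul_zero]
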